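/- Let M ≥ 2 and n₁,…,n_M ≥ 2 be integers, Q = ∏_{i=1}^M n_i − ∑_{i=1}^M n_i + M − 1, and let c_I = (M − 1 − ∑_{i∈I} n_i)/Q for proper subsets I ⊊ {1,…,M} with c_{{1,…,M}} = 1. Then for every j ∈ {1,…,M}: (i) ∑_{I⊆{1,…,M}, j∈I} c_I ∏_{i∈Iᶜ} (n_i − 1) = 0, and (ii) ∑_{I⊆{1,…,M}, j∉I} c_I ∏_{i∈Iᶜ\{j}} (n_i − 1) = 0, where Iᶜ = {1,…,M} \ I and empty products equal 1. -/

import Mathlib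

open Finset

lemma EPSMS.lemA {α : Type*} [DecidableEq α] (T : Finset α) (x : α → ℝ) :
    ∑ I ∈ T.powerset, ∏ k ∈ T \ I, (x k - 1) = ∏ k ∈ T, x k := by
  have h : ∏ k ∈ T, x k = ∏ k ∈ T, ((1:ℝ) + (x k - 1)) :=
    Finset.prod_congr rfl (fun k _ => by ring)
  rw [h, Finset.prod_add]
  simp

lemma EPSMS.lemB {α : Type*} [DecidableEq α] (T : Finset α) (x : α → ℝ) :
    ∑ I ∈ T.powerset, (∑ i ∈ I, x i) * ∏ k ∈ T \ I, (x k - 1)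
      = T.card * ∏ k ∈ T, x k := by
  induction T using Finset.induction_on with
  | empty => simp
  | insert _ _ ha ih =>
    rename_i a s
    rw [Finset.sum_powerset_insert ha]
    have h1 : ∑ t ∈ s.powerset, (∑ i ∈ t, x i) * ∏ k ∈ insert a s \ t, (x k - 1)
        = (x a - 1) * ∑ t ∈ s.powerset, (∑ i ∈ t, x i) * ∏ k ∈ s \ t, (x k - 1) := by
      rw [Finset.mul_sum]
      refine Finset.sum_congr rfl fun t ht => ?_
      rw [Finset.mem_powerset] at ht
      have hat : a ∉ t := fun h => ha (ht h)
      rw [Finset.insert_sdiff_of_notMem _ hat, Finset.prod_insert (by simp [ha])]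
      ring
    have h2 : ∑ t ∈ s.powerset, (∑ i ∈ insert a t, x i) * ∏ k ∈ insert a s \ insert a t, (x k - 1)
        = ∑ t ∈ s.powerset, (x a + ∑ i ∈ t, x i) * ∏ k ∈ s \ t, (x k - 1) := by
      refine Finset.sum_congr rfl fun t ht => ?_
      rw [Finset.mem_powerset] at ht
      have hat : a ∉ t := fun h => ha (ht h)
      have hd : insert a s \ insert a t = s \ t := by
        ext b
        by_cases hb : b = a
        · simp [hb, ha]
        · simp [hb]
      rw [Finset.sum_insert hat, hd]
    rw [h1, h2, ih]
    have h3 : ∑ t ∈ s.powerset, (x a + ∑ i ∈ t, x i) * ∏ k ∈ s \ t, (x k - 1)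
        = x a * (∏ k ∈ s, x k) + s.card * ∏ k ∈ s, x k := by
      have : ∀ t ∈ s.powerset, (x a + ∑ i ∈ t, x i) * ∏ k ∈ s \ t, (x k - 1)
          = x a * ∏ k ∈ s \ t, (x k - 1) + (∑ i ∈ t, x i) * ∏ k ∈ s \ t, (x k - 1) :=
        fun t _ => by ring
      rw [Finset.sum_congr rfl this, Finset.sum_add_distrib, ← Finset.mul_sum,
        EPSMS.lemA, ih]
    rw [h3, Finset.card_insert_of_notMem ha, Finset.prod_insert ha]
    push_cast
    ring

lemma EPSMS.one_le_prod {α : Type*} (s : Finset α) (x : α → ℝ) (h : ∀ i ∈ s, 1 ≤ x i) :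
    (1:ℝ) ≤ ∏ i ∈ s, x i := by
  have := Finset.prod_le_prod (f := fun _ => (1:ℝ)) (g := x) (s := s)
    (by intros; norm_num) h
  simpa using this

lemma EPSMS.weakAM {α : Type*} (s : Finset α) (x : α → ℝ) (h : ∀ i ∈ s, 1 ≤ x i) :
    ∑ i ∈ s, x i ≤ ∏ i ∈ s, x i + s.card - 1 := by
  classical
  induction s using Finset.induction_on with
  | empty => simp
  | insert _ _ ha ih =>
    rename_i a t
    have hmem : ∀ i ∈ t, 1 ≤ x i := fun i hi => h i (Finset.mem_insert_of_mem hi)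
    have hprod := EPSMS.one_le_prod t x hmem
    have hxa : 1 ≤ x a := h a (Finset.mem_insert_self a t)
    have iht := ih hmem
    rw [Finset.sum_insert ha, Finset.prod_insert ha, Finset.card_insert_of_notMem ha]
    push_cast
    nlinarith

/-- **The paper's Statement: formula (35) solves the linear system (32)–(33).**
For the equal-prevalence correlation family and every factor `j`:
(i) `∑_{I∋j} c_I ∏_{i∈Iᶜ}(n_i − 1) = 0` and
(ii) `∑_{I∌j} c_I ∏_{i∈Iᶜ\{j}}(n_i − 1) = 0`. -/
theorem equal_prevalence_satisfies_marginal_system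
    (M : ℕ) (hM : 2 ≤ M) (n : Fin M → ℕ) (hn : ∀ j, 2 ≤ n j)
    (Q : ℝ) (hQ : Q = (∏ i, (n i : ℝ)) - (∑ i, (n i : ℝ)) + M - 1)
    (c : Finset (Fin M) → ℝ)
    (hc : ∀ I : Finset (Fin M), I ≠ Finset.univ →
      c I = ((M : ℝ) - 1 - ∑ i ∈ I, (n i : ℝ)) / Q)
    (hcuniv : c Finset.univ = 1) :
    ∀ j : Fin M,
      (∑ I ∈ (Finset.univ : Finset (Finset (Fin M))).filter (fun I => j ∈ I),
        c I * ∏ i ∈ Iᶜ, ((n i : ℝ) - 1)) = 0 ∧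
      (∑ I ∈ (Finset.univ : Finset (Finset (Fin M))).filter (fun I => j ∉ I),
        c I * ∏ i ∈ Iᶜ \ {j}, ((n i : ℝ) - 1)) = 0 := by
  intro j
  have hx2 : ∀ i, (2:ℝ) ≤ (n i : ℝ) := fun i => by exact_mod_cast hn i
  have hx1 : ∀ (s : Finset (Fin M)), ∀ i ∈ s, (1:ℝ) ≤ (n i : ℝ) :=
    fun s i _ => by linarith [hx2 i]
  set T : Finset (Fin M) := ({j}ᶜ) with hT
  have hTcard : (T.card : ℝ) = (M:ℝ) - 1 := by
    rw [hT, Finset.card_compl, Finset.card_singleton, Fintype.card_fin,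
      Nat.cast_sub (by omega)]
    norm_num
  have hprodsplit : (∏ i, (n i:ℝ)) = (n j:ℝ) * ∏ i ∈ T, (n i:ℝ) := by
    rw [hT, Finset.compl_singleton]
    exact (Finset.mul_prod_erase univ _ (mem_univ j)).symm
  -- positivity of Q
  have hQpos : 0 < Q := by
    have hsumsplit : (∑ i, (n i:ℝ)) = (n j:ℝ) + ∑ i ∈ T, (n i:ℝ) := by
      rw [hT, Finset.compl_singleton]
      exact (Finset.add_sum_erase univ _ (mem_univ j)).symm
    have hweak := EPSMS.weakAM T (fun i => (n i:ℝ)) (hx1 T)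
    have hP2 : (2:ℝ) ≤ ∏ i ∈ T, (n i:ℝ) := by
      obtain ⟨i0, hi0⟩ : T.Nonempty := by
        refine Finset.card_pos.mp ?_
        have : T.card = M - 1 := by
          rw [hT, Finset.card_compl, Finset.card_singleton, Fintype.card_fin]
        omega
      have h1 := EPSMS.one_le_prod (T.erase i0) (fun i => (n i:ℝ))
        (fun i hi => hx1 T i (Finset.mem_of_mem_erase hi))
      have h2 := (Finset.mul_prod_erase T (fun i => (n i:ℝ)) hi0).symm
      rw [h2]
      nlinarith [hx2 i0]
    rw [hQ, hprodsplit, hsumsplit]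
    rw [hTcard] at hweak
    nlinarith [hx2 j]
  constructor
  · -- part (i)
    set c' : Finset (Fin M) → ℝ :=
      fun I => ((M : ℝ) - 1 - ∑ i ∈ I, (n i : ℝ)) / Q with hc'
    have hjuniv : (univ : Finset (Fin M)) ∈
        (Finset.univ : Finset (Finset (Fin M))).filter (fun I => j ∈ I) := by simp
    have hsplit : (∑ I ∈ (Finset.univ : Finset (Finset (Fin M))).filter (fun I => j ∈ I),
          c I * ∏ i ∈ Iᶜ, ((n i : ℝ) - 1))
        = (∑ I ∈ (Finset.univ : Finset (Finset (Fin M))).filter (fun I => j ∈ I),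
          c' I * ∏ i ∈ Iᶜ, ((n i : ℝ) - 1)) + (1 - c' univ) := by
      rw [← Finset.add_sum_erase _ (fun I => c I * ∏ i ∈ Iᶜ, ((n i : ℝ) - 1)) hjuniv,
        ← Finset.add_sum_erase _ (fun I => c' I * ∏ i ∈ Iᶜ, ((n i : ℝ) - 1)) hjuniv]
      have hcongr : ∀ I ∈ ((Finset.univ : Finset (Finset (Fin M))).filter
          (fun I => j ∈ I)).erase univ,
          c I * ∏ i ∈ Iᶜ, ((n i : ℝ) - 1) = c' I * ∏ i ∈ Iᶜ, ((n i : ℝ) - 1) := by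
        intro I hI
        rw [hc I (Finset.ne_of_mem_erase hI)]
      rw [Finset.sum_congr rfl hcongr]
      simp [hcuniv]
      ring
    rw [hsplit]
    have hbij : (∑ I ∈ (Finset.univ : Finset (Finset (Fin M))).filter (fun I => j ∈ I),
          c' I * ∏ i ∈ Iᶜ, ((n i : ℝ) - 1))
        = ∑ J ∈ T.powerset, c' (insert j J) * ∏ i ∈ T \ J, ((n i : ℝ) - 1) := by
      apply Finset.sum_nbij' (i := fun I => I.erase j) (j := fun J => insert j J)
      · intro I hI
        simp only [Finset.mem_filter, Finset.mem_univ, true_and] at hI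
        rw [Finset.mem_powerset, hT, Finset.subset_compl_singleton]
        exact Finset.notMem_erase j I
      · intro J hJ
        simp
      · intro I hI
        simp only [Finset.mem_filter, Finset.mem_univ, true_and] at hI
        exact Finset.insert_erase hI
      · intro J hJ
        rw [Finset.mem_powerset, hT, Finset.subset_compl_singleton] at hJ
        exact Finset.erase_insert hJ
      · intro I hI
        simp only [Finset.mem_filter, Finset.mem_univ, true_and] at hI
        rw [Finset.insert_erase hI]
        have hIc : Iᶜ = T \ I.erase j := by
          ext b
          by_cases hb : b = j
          · simp [hT, hb, hI]
          · simp only [Finset.mem_compl, Finset.mem_sdiff, hT,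
              Finset.mem_compl, Finset.mem_singleton, Finset.mem_erase, hb]
            tauto
        rw [hIc]
    rw [hbij]
    have hstep : ∀ J ∈ T.powerset,
        c' (insert j J) * ∏ i ∈ T \ J, ((n i : ℝ) - 1)
        = ((((M:ℝ) - 1 - (n j:ℝ)) * ∏ i ∈ T \ J, ((n i:ℝ) - 1))
            - (∑ i ∈ J, (n i:ℝ)) * ∏ i ∈ T \ J, ((n i:ℝ) - 1)) / Q := by
      intro J hJ
      rw [Finset.mem_powerset, hT, Finset.subset_compl_singleton] at hJ
      simp only [hc']
      rw [Finset.sum_insert hJ]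
      ring
    rw [Finset.sum_congr rfl hstep, ← Finset.sum_div, Finset.sum_sub_distrib,
      ← Finset.mul_sum, EPSMS.lemA, EPSMS.lemB, hTcard]
    simp only [hc']
    have hnum : ((M:ℝ)-1-(n j:ℝ)) * ∏ k ∈ T, (n k:ℝ) - ((M:ℝ)-1) * ∏ k ∈ T, (n k:ℝ)
        = -(Q - ((M:ℝ) - 1 - ∑ k, (n k:ℝ))) := by
      rw [hQ, hprodsplit]; ring
    rw [hnum]
    field_simp
    ring
  · -- part (ii)
    have hfilter : (Finset.univ : Finset (Finset (Fin M))).filter (fun I => j ∉ I)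
        = T.powerset := by
      ext I
      simp [hT, Finset.subset_compl_singleton]
    rw [hfilter]
    have hstep : ∀ I ∈ T.powerset,
        c I * ∏ i ∈ Iᶜ \ {j}, ((n i : ℝ) - 1)
        = (((M:ℝ) - 1) * ∏ i ∈ T \ I, ((n i:ℝ) - 1)
            - (∑ i ∈ I, (n i:ℝ)) * ∏ i ∈ T \ I, ((n i:ℝ) - 1)) / Q := by
      intro I hI
      rw [Finset.mem_powerset] at hI
      have hjI : j ∉ I := fun h => by
        have := hI h; rw [hT] at this; simp at this
      have hIne : I ≠ univ := fun h => hjI (h ▸ mem_univ j)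
      have hIc : Iᶜ \ {j} = T \ I := by
        ext b
        by_cases hb : b = j <;> simp [hT, hb, hjI]
      rw [hc I hIne, hIc]
      ring
    rw [Finset.sum_congr rfl hstep, ← Finset.sum_div, Finset.sum_sub_distrib,
      ← Finset.mul_sum, EPSMS.lemA, EPSMS.lemB, hTcard]
    simp
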